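/- arXiv:2109.14674 — 2 statements merged into one kernel-verified Lean document; each statement's English description precedes it below -/
import Mathlib

section
/- Let λ ∈ ℝ \ {0} and let h : Ω → ℝ be a C² solution of the Helmholtz equation Δh + λ²h = 0 on an open set Ω ⊆ ℝ². Then the reduced quaternion-valued function F = −(1/λ)(D − λ)h = h − (1/λ)(i ∂h/∂x + j ∂h/∂y) satisfies DF + λF = 0 and its scalar part equals h. -/
/-- The quaternionic imaginary unit `i`. -/
def quatI : Quaternion ℝ := ⟨0, 1, 0, 0⟩

/-- The quaternionic imaginary unit `j`. -/
def quatJ : Quaternion ℝ := ⟨0, 0, 1, 0⟩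

/-- The quaternionic Dirac operator `D = i ∂/∂x + j ∂/∂y` acting on the left. -/
noncomputable def diracD (F : ℝ × ℝ → Quaternion ℝ) (p : ℝ × ℝ) : Quaternion ℝ :=
  quatI * fderiv ℝ F p (1, 0) +
    quatJ * fderiv ℝ F p (0, 1)

/-- The reduced quaternion-valued function `F = −(1/λ)(D − λ)h = h − (1/λ)(i hₓ + j h_y)`
obtained from a real-valued `h`. -/
noncomputable def metaExt (lam : ℝ) (h : ℝ × ℝ → ℝ) (q : ℝ × ℝ) : Quaternion ℝ :=
  ⟨h q, -(1 / lam) * fderiv ℝ h q (1, 0), -(1 / lam) * fderiv ℝ h q (0, 1), 0⟩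

theorem quatI_re' : quatI.re = 0 := rfl
theorem quatI_imI' : quatI.imI = 1 := rfl
theorem quatI_imJ' : quatI.imJ = 0 := rfl
theorem quatI_imK' : quatI.imK = 0 := rfl
theorem quatJ_re' : quatJ.re = 0 := rfl
theorem quatJ_imI' : quatJ.imI = 0 := rfl
theorem quatJ_imJ' : quatJ.imJ = 1 := rfl
theorem quatJ_imK' : quatJ.imK = 0 := rfl
theorem metaExt_re' (lam : ℝ) (h : ℝ × ℝ → ℝ) (q : ℝ × ℝ) : (metaExt lam h q).re = h q := rfl
theorem metaExt_imI' (lam : ℝ) (h : ℝ × ℝ → ℝ) (q : ℝ × ℝ) :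
    (metaExt lam h q).imI = -(1 / lam) * fderiv ℝ h q (1, 0) := rfl
theorem metaExt_imJ' (lam : ℝ) (h : ℝ × ℝ → ℝ) (q : ℝ × ℝ) :
    (metaExt lam h q).imJ = -(1 / lam) * fderiv ℝ h q (0, 1) := rfl
theorem metaExt_imK' (lam : ℝ) (h : ℝ × ℝ → ℝ) (q : ℝ × ℝ) : (metaExt lam h q).imK = 0 := rfl

/-- If `h` is a real `C²` solution of the Helmholtz equation `Δh + λ²h = 0` on an open
set `Ω ⊆ ℝ²` and `λ ≠ 0`, then `F = −(1/λ)(D − λ)h` satisfies `DF + λF = 0` on `Ω`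
and its scalar part equals `h`. -/
theorem helmholtz_to_metamonogenic (Ω : Set (ℝ × ℝ)) (hΩ : IsOpen Ω) (lam : ℝ)
    (hlam : lam ≠ 0) (h : ℝ × ℝ → ℝ) (hh : ContDiffOn ℝ 2 h Ω)
    (hHelm : ∀ p ∈ Ω,
      fderiv ℝ (fun q => fderiv ℝ h q (1, 0)) p (1, 0) +
          fderiv ℝ (fun q => fderiv ℝ h q (0, 1)) p (0, 1) + lam ^ 2 * h p = 0) :
    ∀ p ∈ Ω,
      diracD (metaExt lam h) p + lam • metaExt lam h p = 0 ∧ (metaExt lam h p).re = h p := by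
  intro p hp
  have hc : ContDiffAt ℝ 2 h p := hh.contDiffAt (hΩ.mem_nhds hp)
  have dh : DifferentiableAt ℝ h p := hc.differentiableAt two_ne_zero
  have h1 : ContDiffAt ℝ 1 (fderiv ℝ h) p := hc.fderiv_right le_rfl
  have d2 : DifferentiableAt ℝ (fderiv ℝ h) p := h1.differentiableAt one_ne_zero
  set f' := fderiv ℝ (fderiv ℝ h) p with hf'
  -- derivative of the partial derivative maps
  have Hx : HasFDerivAt (fun q => fderiv ℝ h q ((1 : ℝ), (0 : ℝ)))
      ((ContinuousLinearMap.apply ℝ ℝ ((1 : ℝ), (0 : ℝ))).comp f') p :=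
    (ContinuousLinearMap.apply ℝ ℝ ((1 : ℝ), (0 : ℝ))).hasFDerivAt.comp p d2.hasFDerivAt
  have Hy : HasFDerivAt (fun q => fderiv ℝ h q ((0 : ℝ), (1 : ℝ)))
      ((ContinuousLinearMap.apply ℝ ℝ ((0 : ℝ), (1 : ℝ))).comp f') p :=
    (ContinuousLinearMap.apply ℝ ℝ ((0 : ℝ), (1 : ℝ))).hasFDerivAt.comp p d2.hasFDerivAt
  -- metaExt as a sum of smul_const pieces
  have hrep : metaExt lam h = fun q =>
      h q • (1 : Quaternion ℝ) + (-(1 / lam) * fderiv ℝ h q (1, 0)) • quatI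
        + (-(1 / lam) * fderiv ℝ h q (0, 1)) • quatJ := by
    funext q
    apply Quaternion.ext <;>
      simp [metaExt_re', metaExt_imI', metaExt_imJ', metaExt_imK', quatI_re', quatI_imI', quatI_imJ', quatI_imK', quatJ_re', quatJ_imI', quatJ_imJ', quatJ_imK', Quaternion.re_one, Quaternion.imI_one, Quaternion.imJ_one, Quaternion.imK_one]
  have HF : HasFDerivAt (metaExt lam h)
      ((fderiv ℝ h p).smulRight (1 : Quaternion ℝ)
        + ((-(1 / lam)) • ((ContinuousLinearMap.apply ℝ ℝ ((1 : ℝ), (0 : ℝ))).comp f')).smulRight quatI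
        + ((-(1 / lam)) • ((ContinuousLinearMap.apply ℝ ℝ ((0 : ℝ), (1 : ℝ))).comp f')).smulRight quatJ) p := by
    rw [hrep]
    exact ((dh.hasFDerivAt.smul_const (1 : Quaternion ℝ)).add
      ((Hx.const_mul (-(1 / lam))).smul_const quatI)).add
      ((Hy.const_mul (-(1 / lam))).smul_const quatJ)
  have hfd := HF.fderiv
  -- second derivative symmetry
  have hsymm : f' (1, 0) (0, 1) = f' (0, 1) (1, 0) :=
    (hc.isSymmSndFDerivAt (by norm_num)) _ _
  -- rewrite the Helmholtz hypothesis in terms of f'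
  have hx2 : fderiv ℝ (fun q => fderiv ℝ h q ((1 : ℝ), (0 : ℝ))) p = _ := Hx.fderiv
  have hy2 : fderiv ℝ (fun q => fderiv ℝ h q ((0 : ℝ), (1 : ℝ))) p = _ := Hy.fderiv
  have hHelm' : f' (1, 0) (1, 0) + f' (0, 1) (0, 1) + lam ^ 2 * h p = 0 := by
    have := hHelm p hp
    rw [hx2, hy2] at this
    simpa using this
  constructor
  · show quatI * fderiv ℝ (metaExt lam h) p (1, 0)
        + quatJ * fderiv ℝ (metaExt lam h) p (0, 1) + lam • metaExt lam h p = 0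
    rw [hfd]
    apply Quaternion.ext <;>
      simp only [ContinuousLinearMap.add_apply, ContinuousLinearMap.smulRight_apply,
        ContinuousLinearMap.smul_apply, ContinuousLinearMap.comp_apply,
        ContinuousLinearMap.apply_apply, Quaternion.re_add, Quaternion.imI_add,
        Quaternion.imJ_add, Quaternion.imK_add, Quaternion.re_mul, Quaternion.imI_mul,
        Quaternion.imJ_mul, Quaternion.imK_mul, Quaternion.re_smul, Quaternion.imI_smul,
        Quaternion.imJ_smul, Quaternion.imK_smul, Quaternion.re_one, Quaternion.imI_one,
        Quaternion.imJ_one, Quaternion.imK_one, quatI_re', quatI_imI', quatI_imJ', quatI_imK', quatJ_re', quatJ_imI', quatJ_imJ', quatJ_imK',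
        metaExt_re', metaExt_imI', metaExt_imJ', metaExt_imK', smul_eq_mul]
    · show _ = (0 : Quaternion ℝ).re
      simp only [Quaternion.re_zero]
      field_simp
      linarith [hHelm']
    · show _ = (0 : Quaternion ℝ).imI
      simp only [Quaternion.imI_zero]
      field_simp
      ring
    · show _ = (0 : Quaternion ℝ).imJ
      simp only [Quaternion.imJ_zero]
      field_simp
      ring
    · show _ = (0 : Quaternion ℝ).imK
      simp only [Quaternion.imK_zero]
      rw [hsymm]
      ring
  · rfl
end

section
/- Suppose h₁, h₂ : Ω → ℝ are C² solutions of Δh + λ²h = 0 with the same values, and F₁ = −(1/λ)(D−λ)h₁, F₂ = −(1/λ)(D−λ)h₂. If h₁ = h₂ on Ω then F₁ = F₂; consequently a λ-metamonogenic reduced quaternion-valued function on a connected open set is uniquely determined by its scalar part. -/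
/-- `re` as a continuous linear map. -/
noncomputable def reCLM : Quaternion ℝ →L[ℝ] ℝ :=
  { QuaternionAlgebra.reₗ (-1 : ℝ) (0 : ℝ) (-1 : ℝ) with cont := Quaternion.continuous_re }

/-- `imK` as a continuous linear map. -/
noncomputable def imKCLM : Quaternion ℝ →L[ℝ] ℝ :=
  { QuaternionAlgebra.imKₗ (-1 : ℝ) (0 : ℝ) (-1 : ℝ) with cont := Quaternion.continuous_imK }

lemma metamono_eq_metaExt (Ω : Set (ℝ × ℝ)) (hΩ : IsOpen Ω) (lam : ℝ) (hlam : lam ≠ 0)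
    (F : ℝ × ℝ → Quaternion ℝ) (hF : ContDiffOn ℝ 1 F Ω)
    (hK : ∀ p ∈ Ω, (F p).imK = 0)
    (hD : ∀ p ∈ Ω, diracD F p + lam • F p = 0) :
    ∀ p ∈ Ω, F p = metaExt lam (fun q => (F q).re) p := by
  intro p hp
  have hdF : DifferentiableAt ℝ F p :=
    (hF.contDiffAt (hΩ.mem_nhds hp)).differentiableAt one_ne_zero
  set L := fderiv ℝ F p with hL
  -- re part
  have hre : ∀ v, fderiv ℝ (fun q => (F q).re) p v = (L v).re := by
    intro v
    have : HasFDerivAt (fun q => (F q).re) (reCLM.comp L) p :=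
      (reCLM.hasFDerivAt.comp p hdF.hasFDerivAt)
    rw [this.fderiv]; rfl
  -- imK part of the derivative vanishes
  have hKd : ∀ v, (L v).imK = 0 := by
    intro v
    have hev : (fun q => (F q).imK) =ᶠ[nhds p] fun _ => (0 : ℝ) :=
      Filter.eventuallyEq_of_mem (hΩ.mem_nhds hp) hK
    have h1 : HasFDerivAt (fun q => (F q).imK) (imKCLM.comp L) p :=
      (imKCLM.hasFDerivAt.comp p hdF.hasFDerivAt)
    have h2 : fderiv ℝ (fun q => (F q).imK) p = 0 := by
      rw [hev.fderiv_eq]; simp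
    have := h1.fderiv
    rw [h2] at this
    have := congrArg (fun (T : (ℝ × ℝ) →L[ℝ] ℝ) => T v) this
    exact this.symm
  have hE := hD p hp
  have hEI := congrArg QuaternionAlgebra.imI hE
  have hEJ := congrArg QuaternionAlgebra.imJ hE
  simp only [diracD, Quaternion.imI_add, Quaternion.imJ_add, Quaternion.imI_mul,
    Quaternion.imJ_mul, Quaternion.imI_smul, Quaternion.imJ_smul, Quaternion.imI_zero,
    Quaternion.imJ_zero] at hEI hEJ
  -- components of quatI, quatJ
  have hx : (L (1, 0)).imK = 0 := hKd _
  have hy : (L (0, 1)).imK = 0 := hKd _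
  ext
  · rfl
  · show (F p).imI = -(1 / lam) * fderiv ℝ (fun q => (F q).re) p (1, 0)
    rw [hre]
    -- from hEI : (L(1,0)).re + (L(0,1)).imK + lam * (F p).imI = 0
    have : (L (1, 0)).re + (L (0, 1)).imK + lam * (F p).imI = 0 := by
      convert hEI using 2 <;> simp [← hL, quatI, quatJ]
    rw [hy] at this
    field_simp
    linarith
  · show (F p).imJ = -(1 / lam) * fderiv ℝ (fun q => (F q).re) p (0, 1)
    rw [hre]
    have : -(L (1, 0)).imK + (L (0, 1)).re + lam * (F p).imJ = 0 := by
      convert hEJ using 2 <;> simp [← hL, quatI, quatJ]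
    rw [hx] at this
    field_simp
    linarith
  · show (F p).imK = 0
    exact hK p hp

/-- If `h₁ = h₂` on `Ω` then `F₁ = −(1/λ)(D−λ)h₁` and `F₂ = −(1/λ)(D−λ)h₂` agree on `Ω`;
consequently a `λ`-metamonogenic reduced quaternion-valued function on a connected open
set is uniquely determined by its scalar part. -/
theorem metamonogenic_determined_by_scalar_part (Ω : Set (ℝ × ℝ)) (hΩ : IsOpen Ω)
    (hconn : IsConnected Ω) (lam : ℝ) (hlam : lam ≠ 0) :
    (∀ h₁ h₂ : ℝ × ℝ → ℝ, ContDiffOn ℝ 2 h₁ Ω → ContDiffOn ℝ 2 h₂ Ω →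
      (∀ p ∈ Ω,
        fderiv ℝ (fun q => fderiv ℝ h₁ q (1, 0)) p (1, 0) +
            fderiv ℝ (fun q => fderiv ℝ h₁ q (0, 1)) p (0, 1) + lam ^ 2 * h₁ p = 0) →
      (∀ p ∈ Ω,
        fderiv ℝ (fun q => fderiv ℝ h₂ q (1, 0)) p (1, 0) +
            fderiv ℝ (fun q => fderiv ℝ h₂ q (0, 1)) p (0, 1) + lam ^ 2 * h₂ p = 0) →
      (∀ p ∈ Ω, h₁ p = h₂ p) → ∀ p ∈ Ω, metaExt lam h₁ p = metaExt lam h₂ p) ∧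
    (∀ F G : ℝ × ℝ → Quaternion ℝ, ContDiffOn ℝ 1 F Ω → ContDiffOn ℝ 1 G Ω →
      (∀ p ∈ Ω, (F p).imK = 0) → (∀ p ∈ Ω, (G p).imK = 0) →
      (∀ p ∈ Ω, diracD F p + lam • F p = 0) →
      (∀ p ∈ Ω, diracD G p + lam • G p = 0) →
      (∀ p ∈ Ω, (F p).re = (G p).re) → ∀ p ∈ Ω, F p = G p) := by
  constructor
  · intro h₁ h₂ _ _ _ _ heq p hp
    have hev : h₁ =ᶠ[nhds p] h₂ :=
      Filter.eventuallyEq_of_mem (hΩ.mem_nhds hp) heq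
    unfold metaExt
    rw [heq p hp, hev.fderiv_eq]
  · intro F G hF hG hFK hGK hFD hGD hre p hp
    rw [metamono_eq_metaExt Ω hΩ lam hlam F hF hFK hFD p hp,
      metamono_eq_metaExt Ω hΩ lam hlam G hG hGK hGD p hp]
    have hev : (fun q => (F q).re) =ᶠ[nhds p] (fun q => (G q).re) :=
      Filter.eventuallyEq_of_mem (hΩ.mem_nhds hp) hre
    unfold metaExt
    beta_reduce
    rw [hre p hp, hev.fderiv_eq]
end
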